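/- Let F = (f_1,...,f_p) be a unit-norm (p/d)-tight frame for its span, where d = dim span F < n = dim H. Then the minimum number r_0 of unit-norm vectors that must be added to F to obtain a tight frame for H equals: (a) (n−d)p/d if (n−d)p/d < n and (n−d)p/d ∈ ℕ; (b) n if (n−d)p/d < n and (n−d)p/d ∉ ℕ; (c) ⌈(n−d)p/d⌉ if (n−d)p/d ≥ n. -/

import Mathlib

open scoped BigOperators

noncomputable def frameOp {n p : ℕ} (f : Fin p → EuclideanSpace ℂ (Fin n)) :
    EuclideanSpace ℂ (Fin n) →L[ℂ] EuclideanSpace ℂ (Fin n) :=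
  ∑ i, (innerSL ℂ (f i)).smulRight (f i)

def HasEigenvalues {n : ℕ} (S : EuclideanSpace ℂ (Fin n) →L[ℂ] EuclideanSpace ℂ (Fin n))
    (Λ : Fin n → ℝ) : Prop :=
  Antitone Λ ∧ ∃ e : OrthonormalBasis (Fin n) ℂ (EuclideanSpace ℂ (Fin n)),
    ∀ i, S (e i) = (Λ i : ℂ) • e i

noncomputable def tailSum {n : ℕ} (hn : 0 < n) (Λ : Fin n → ℝ) (k : ℕ) : ℝ :=
  ∑ i ∈ Finset.range k, Λ ⟨n - 1 - i, by omega⟩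

def Completable {n p : ℕ} (f : Fin p → EuclideanSpace ℂ (Fin n)) (a : ℕ → ℝ) (r : ℕ) : Prop :=
  ∃ (c : ℝ) (g : Fin r → EuclideanSpace ℂ (Fin n)), 0 < c ∧
    (∀ i : Fin r, ‖g i‖ ^ 2 = a (i : ℕ)) ∧
    frameOp f + frameOp g = (c : ℂ) • ContinuousLinearMap.id ℂ (EuclideanSpace ℂ (Fin n))

noncomputable def cseq {n : ℕ} (hn : 0 < n) (Λ : Fin n → ℝ) (a : ℕ → ℝ) : ℕ → ℝ
  | 0 => Λ ⟨0, hn⟩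
  | k + 1 => max (cseq hn Λ a k)
      ((1 / (k + 1 : ℝ)) * (∑ i ∈ Finset.range (k + 1), a i + tailSum hn Λ (k + 1)))

def IsBessel {n : ℕ} (g : ℕ → EuclideanSpace ℂ (Fin n)) : Prop :=
  ∃ b > 0, ∀ x : EuclideanSpace ℂ (Fin n),
    Summable (fun i => ‖(inner ℂ (g i) x : ℂ)‖ ^ 2) ∧
    ∑' i, ‖(inner ℂ (g i) x : ℂ)‖ ^ 2 ≤ b * ‖x‖ ^ 2

def CompletableInf {n p : ℕ} (f : Fin p → EuclideanSpace ℂ (Fin n)) (a : ℕ → ℝ) : Prop :=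
  ∃ (c : ℝ) (g : ℕ → EuclideanSpace ℂ (Fin n)), 0 < c ∧ IsBessel g ∧
    (∀ i, ‖g i‖ ^ 2 = a i) ∧
    ∀ x, frameOp f x + ∑' i, (inner ℂ (g i) x : ℂ) • g i = (c : ℂ) • x


open scoped ComplexConjugate
open Complex Finset in
lemma expSum_zero (r : ℕ) (hr : 0 < r) (m : ℤ) (hm : ¬ ((r:ℤ) ∣ m)) :
    ∑ j : Fin r, Complex.exp ((2 * (Real.pi:ℂ) * Complex.I / r) * ((j:ℕ):ℂ) * (m:ℂ)) = 0 := by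
  set w : ℂ := 2 * (Real.pi:ℂ) * Complex.I / r with hw
  set z : ℂ := Complex.exp (w * m) with hz
  have hrC : (r:ℂ) ≠ 0 := Nat.cast_ne_zero.mpr hr.ne'
  have hne : (2 * (Real.pi:ℂ) * Complex.I) ≠ 0 := by
    simp [Real.pi_ne_zero, Complex.I_ne_zero, Complex.ofReal_ne_zero]
  have hzj : ∀ j : Fin r, Complex.exp (w * ((j:ℕ):ℂ) * (m:ℂ)) = z ^ (j:ℕ) := by
    intro j
    rw [hz, ← Complex.exp_nat_mul]
    ring_nf
  simp_rw [hzj]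
  rw [Fin.sum_univ_eq_sum_range (fun j => z ^ j)]
  have hz1 : z ≠ 1 := by
    intro h
    rw [hz, Complex.exp_eq_one_iff] at h
    obtain ⟨t, ht⟩ := h
    apply hm
    refine ⟨t, ?_⟩
    rw [mul_comm]
    have hmc : (m:ℂ) = (t:ℂ) * (r:ℂ) := by
      have h2 : (2 * (Real.pi:ℂ) * Complex.I) * (m:ℂ)
          = (2 * (Real.pi:ℂ) * Complex.I) * ((t:ℂ) * (r:ℂ)) := by
        have h3 := congrArg (fun y => y * (r:ℂ)) ht
        simp only [hw] at h3
        field_simp at h3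
        linear_combination (2 * (Real.pi:ℂ) * Complex.I) * h3
      exact mul_left_cancel₀ hne h2
    exact_mod_cast hmc
  rw [geom_sum_eq hz1]
  have hzr : z ^ r = 1 := by
    rw [hz, ← Complex.exp_nat_mul]
    have h4 : (r:ℂ) * (w * m) = (m:ℂ) * (2 * (Real.pi:ℂ) * Complex.I) := by
      rw [hw]; field_simp
    rw [h4, Complex.exp_int_mul_two_pi_mul_I]
  rw [hzr]
  simp

lemma frameOp_apply {n p : ℕ} (f : Fin p → EuclideanSpace ℂ (Fin n)) (x : EuclideanSpace ℂ (Fin n)) :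
    frameOp f x = ∑ i, (inner ℂ (f i) x : ℂ) • f i := by
  simp [frameOp, ContinuousLinearMap.sum_apply]

lemma inner_frameOp {n p : ℕ} (f : Fin p → EuclideanSpace ℂ (Fin n)) (x : EuclideanSpace ℂ (Fin n)) :
    (inner ℂ x (frameOp f x) : ℂ) = ((∑ i, ‖(inner ℂ (f i) x : ℂ)‖ ^ 2 : ℝ) : ℂ) := by
  rw [frameOp_apply, inner_sum]
  push_cast
  refine Finset.sum_congr rfl fun i _ => ?_
  rw [inner_smul_right, ← inner_conj_symm x (f i)]
  rw [mul_comm, ← Complex.normSq_eq_conj_mul_self, Complex.normSq_eq_norm_sq]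
  norm_cast

lemma trace_frameOp {n p : ℕ} (f : Fin p → EuclideanSpace ℂ (Fin n)) :
    ∑ k, (inner ℂ ((EuclideanSpace.basisFun (Fin n) ℂ) k)
        (frameOp f ((EuclideanSpace.basisFun (Fin n) ℂ) k)) : ℂ)
      = ∑ i, ((‖f i‖ ^ 2 : ℝ) : ℂ) := by
  set e := EuclideanSpace.basisFun (Fin n) ℂ
  have : ∀ k, (inner ℂ (e k) (frameOp f (e k)) : ℂ)
      = ∑ i, (inner ℂ (f i) (e k) : ℂ) * (inner ℂ (e k) (f i) : ℂ) := by
    intro k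
    rw [frameOp_apply, inner_sum]
    refine Finset.sum_congr rfl fun i _ => ?_
    rw [inner_smul_right]
  simp_rw [this]
  rw [Finset.sum_comm]
  refine Finset.sum_congr rfl fun i _ => ?_
  rw [e.sum_inner_mul_inner (f i) (f i), inner_self_eq_norm_sq_to_K]
  norm_cast

section LB
variable {n p d : ℕ} (hn : 0 < n) (hd : 0 < d) (hdn : d < n) (hdp : d ≤ p)
  (f : Fin p → EuclideanSpace ℂ (Fin n)) (hf : ∀ i, ‖f i‖ = 1)
  (hdim : Module.finrank ℂ (Submodule.span ℂ (Set.range f)) = d)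
  (hS : ∀ x, frameOp f x = (((p : ℝ) / d : ℝ) : ℂ) •
      ((Submodule.orthogonalProjection (Submodule.span ℂ (Set.range f)) x : Submodule.span ℂ (Set.range f)) :
        EuclideanSpace ℂ (Fin n)))

include hn hd hdn hdp hf hdim hS in
set_option maxHeartbeats 1000000 in
lemma lower_bound (k : ℕ) (h : Completable f (fun _ => 1) k) :
    ((n:ℝ) - d) * ((p:ℝ)/d) ≤ k ∧ (k < n → (k : ℝ) = ((n:ℝ) - d) * ((p:ℝ)/d)) := by
  obtain ⟨c, g, hc, hg, heq⟩ := h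
  have heq' : ∀ x, frameOp f x + frameOp g x = (c : ℂ) • x := by
    intro x
    have := ContinuousLinearMap.ext_iff.mp heq x
    simpa using this
  set V := Submodule.span ℂ (Set.range f) with hV
  -- trace identity : p + k = c * n
  have htrace : (p : ℝ) + k = c * n := by
    set e := EuclideanSpace.basisFun (Fin n) ℂ
    have h1 : ∑ j, (inner ℂ (e j) (frameOp f (e j) + frameOp g (e j)) : ℂ)
        = ∑ j, (inner ℂ (e j) ((c:ℂ) • e j) : ℂ) := by
      refine Finset.sum_congr rfl fun j _ => ?_
      rw [heq' (e j)]
    have h2 : ∀ j, (inner ℂ (e j) ((c:ℂ) • e j) : ℂ) = (c : ℂ) := by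
      intro j
      rw [inner_smul_right, inner_self_eq_norm_sq_to_K]
      simp [e.orthonormal.1 j]
    simp_rw [inner_add_right, Finset.sum_add_distrib, h2] at h1
    rw [trace_frameOp f, trace_frameOp g] at h1
    simp_rw [hf, hg] at h1
    simp only [Finset.sum_const, Finset.card_univ, Fintype.card_fin, nsmul_eq_mul] at h1
    have h1' : (((p:ℝ) + k : ℝ) : ℂ) = ((c * n : ℝ) : ℂ) := by
      push_cast at h1 ⊢
      linear_combination h1
    exact_mod_cast h1'
  -- c ≥ p / d
  have hcge : (p : ℝ) / d ≤ c := by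
    have hVne : V ≠ ⊥ := by
      intro hbot
      rw [hbot] at hdim
      simp at hdim; omega
    obtain ⟨v, hvV, hv0⟩ := Submodule.exists_mem_ne_zero_of_ne_bot hVne
    set x := (‖v‖⁻¹ : ℂ) • v with hx
    have hxV : x ∈ V := V.smul_mem _ hvV
    have hxn : ‖x‖ = 1 := by
      rw [hx, norm_smul]
      simp [norm_ne_zero_iff.mpr hv0, inv_mul_cancel₀]
    have hPx : ((Submodule.orthogonalProjection V x : V) : EuclideanSpace ℂ (Fin n)) = x :=
      Submodule.starProjection_eq_self_iff.mpr hxV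
    have hfx : frameOp f x = (((p:ℝ)/d : ℝ) : ℂ) • x := by rw [hS x, hPx]
    have := heq' x
    rw [hfx] at this
    have h3 : (inner ℂ x (frameOp g x) : ℂ) = ((c - (p:ℝ)/d : ℝ) : ℂ) := by
      have h4 := congrArg (fun y => (inner ℂ x y : ℂ)) this
      simp only [inner_add_right, inner_smul_right, inner_self_eq_norm_sq_to_K, hxn] at h4
      push_cast at h4 ⊢
      linear_combination h4
    rw [inner_frameOp] at h3
    have h5 : (∑ i, ‖(inner ℂ (g i) x : ℂ)‖ ^ 2 : ℝ) = c - (p:ℝ)/d := by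
      exact_mod_cast h3
    have h6 : (0:ℝ) ≤ ∑ i, ‖(inner ℂ (g i) x : ℂ)‖ ^ 2 :=
      Finset.sum_nonneg fun i _ => sq_nonneg _
    linarith
  have hdR : (0:ℝ) < d := by exact_mod_cast hd
  constructor
  · have : ((n:ℝ) - d) * ((p:ℝ)/d) = (p:ℝ)/d * n - p := by field_simp
    rw [this]
    nlinarith
  · intro hkn
    -- rank argument : c = p / d
    set W := Submodule.span ℂ (Set.range g) with hW
    have hWrank : Module.finrank ℂ W ≤ k := by
      simpa [Set.finrank] using finrank_range_le_card (R := ℂ) g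
    have hWo : Wᗮ ≠ ⊥ := by
      intro hbot
      have h7 := Submodule.finrank_add_finrank_orthogonal (K := W)
      rw [hbot] at h7
      simp [finrank_euclideanSpace_fin] at h7
      omega
    obtain ⟨x, hxW, hx0⟩ := Submodule.exists_mem_ne_zero_of_ne_bot hWo
    have hgx : ∀ i, (inner ℂ (g i) x : ℂ) = 0 := fun i =>
      hxW (g i) (Submodule.subset_span (Set.mem_range_self i))
    have hgo : frameOp g x = 0 := by
      rw [frameOp_apply]
      simp [hgx]
    have h8 := heq' x
    rw [hgo, add_zero, hS x] at h8
    set Px := ((Submodule.orthogonalProjection V x : V) : EuclideanSpace ℂ (Fin n)) with hPx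
    have h9 : (inner ℂ x Px : ℂ) = ((‖Px‖ ^ 2 : ℝ) : ℂ) := by
      have hdec : (inner ℂ x Px : ℂ) = inner ℂ Px Px + (inner ℂ (x - Px) Px : ℂ) := by
        rw [← inner_add_left]
        congr 1
        abel
      have hperp : (inner ℂ (x - Px) Px : ℂ) = 0 :=
        Submodule.inner_left_of_mem_orthogonal (Submodule.orthogonalProjection V x).2
          (V.sub_starProjection_mem_orthogonal x)
      rw [hdec, hperp, add_zero, inner_self_eq_norm_sq_to_K]
      norm_cast
    have h10 := congrArg (fun y => (inner ℂ x y : ℂ)) h8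
    simp only [inner_smul_right, h9, inner_self_eq_norm_sq_to_K] at h10
    have h11 : (p:ℝ)/d * (‖Px‖ * ‖Px‖) = c * (‖x‖ * ‖x‖) := by
      have h := congrArg Complex.re h10
      simpa [Complex.mul_re, pow_two] using h
    have h12 : ‖Px‖ * ‖Px‖ ≤ ‖x‖ * ‖Px‖ := by
      have h12' := norm_inner_le_norm (𝕜 := ℂ) x Px
      rw [h9] at h12'
      simp only [Complex.norm_real, Real.norm_eq_abs, pow_two] at h12'
      rwa [_root_.abs_of_nonneg (mul_self_nonneg _)] at h12'
    have hxpos : 0 < ‖x‖ := norm_pos_iff.mpr hx0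
    clear_value Px
    clear h8 h9 h10 hgx hgo hxW heq heq' hS hPx
    have key : ∀ A B : ℝ, 0 ≤ A → 0 < B → (p:ℝ)/d * (A * A) = c * (B * B) →
        A * A ≤ B * A → c ≤ (p:ℝ)/d := by
      intro A B hA hB k1 k2
      have hp0 : (0:ℝ) ≤ (p:ℝ)/d := by positivity
      have hAB : A ≤ B := by nlinarith
      have h1 : A * A ≤ B * B := mul_self_le_mul_self hA hAB
      have h2 : (p:ℝ)/d * (A*A) ≤ (p:ℝ)/d * (B*B) := mul_le_mul_of_nonneg_left h1 hp0
      have h3 : c * (B*B) ≤ (p:ℝ)/d * (B*B) := by rw [← k1]; exact h2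
      exact le_of_mul_le_mul_right h3 (mul_pos hB hB)
    have hcle : c ≤ (p:ℝ)/d := key ‖Px‖ ‖x‖ (norm_nonneg _) hxpos h11 h12
    have hceq : c = (p:ℝ)/d := le_antisymm hcle hcge
    have : ((n:ℝ) - d) * ((p:ℝ)/d) = (p:ℝ)/d * n - p := by field_simp
    rw [this, ← hceq]
    linarith
end LB

section UB
variable {n p d : ℕ}

set_option maxHeartbeats 1000000 in
lemma construct (hn : 0 < n) (hd : 0 < d) (hdn : d < n) (hdp : d ≤ p)
    (f : Fin p → EuclideanSpace ℂ (Fin n))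
    (hdim : Module.finrank ℂ (Submodule.span ℂ (Set.range f)) = d)
    (hS : ∀ x, frameOp f x = (((p : ℝ) / d : ℝ) : ℂ) •
      ((Submodule.orthogonalProjection (Submodule.span ℂ (Set.range f)) x : Submodule.span ℂ (Set.range f)) :
        EuclideanSpace ℂ (Fin n)))
    (r : ℕ) (c : ℝ) (hc : 0 < c) (hrnd : n - d ≤ r) (hr : 0 < r)
    (halpha : (p:ℝ)/d ≤ c) (htr : (n:ℝ) * c - p = r)
    (hcase : c = (p:ℝ)/d ∨ n ≤ r) :
    Completable f (fun _ => 1) r := by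
  classical
  set V := Submodule.span ℂ (Set.range f) with hV
  have hfinV : Module.finrank ℂ V = d := hdim
  have hfinW : Module.finrank ℂ (Vᗮ : Submodule ℂ (EuclideanSpace ℂ (Fin n))) = n - d := by
    have h1 := Submodule.finrank_add_finrank_orthogonal (K := V)
    rw [hfinV, finrank_euclideanSpace_fin] at h1
    omega
  set b1 : OrthonormalBasis (Fin d) ℂ V :=
    (stdOrthonormalBasis ℂ V).reindex (finCongr hfinV) with hb1
  set b2 : OrthonormalBasis (Fin (n - d)) ℂ (Vᗮ : Submodule ℂ (EuclideanSpace ℂ (Fin n))) :=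
    (stdOrthonormalBasis ℂ (Vᗮ : Submodule ℂ (EuclideanSpace ℂ (Fin n)))).reindex
      (finCongr hfinW) with hb2
  set e : Fin n → EuclideanSpace ℂ (Fin n) := fun k =>
    if h : (k:ℕ) < d then (b1 ⟨k, h⟩ : EuclideanSpace ℂ (Fin n))
    else (b2 ⟨(k:ℕ) - d, by have := k.isLt; omega⟩ : EuclideanSpace ℂ (Fin n)) with he
  have heV : ∀ k : Fin n, (k:ℕ) < d → e k ∈ V := by
    intro k h; simp only [he, dif_pos h]; exact Submodule.coe_mem _
  have heW : ∀ k : Fin n, ¬ (k:ℕ) < d → e k ∈ Vᗮ := by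
    intro k h; simp only [he, dif_neg h]; exact Submodule.coe_mem _
  have hon : Orthonormal ℂ e := by
    rw [orthonormal_iff_ite]
    intro k l
    by_cases hk : (k:ℕ) < d <;> by_cases hl : (l:ℕ) < d
    · simp only [he, dif_pos hk, dif_pos hl]
      rw [← Submodule.coe_inner, orthonormal_iff_ite.mp b1.orthonormal]
      congr 1
      simp [Fin.ext_iff]
    · rw [if_neg (by intro hkl; rw [hkl] at hk; exact hl hk)]
      exact Submodule.inner_right_of_mem_orthogonal (heV k hk) (heW l hl)
    · rw [if_neg (by intro hkl; rw [hkl] at hk; exact hk hl)]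
      exact Submodule.inner_left_of_mem_orthogonal (heV l hl) (heW k hk)
    · simp only [he, dif_neg hk, dif_neg hl]
      rw [← Submodule.coe_inner, orthonormal_iff_ite.mp b2.orthonormal]
      congr 1
      simp only [Fin.ext_iff, eq_iff_iff]
      have := k.isLt; have := l.isLt
      omega
  -- the orthonormal basis
  have hcard : Fintype.card (Fin n) = Module.finrank ℂ (EuclideanSpace ℂ (Fin n)) := by
    simp [finrank_euclideanSpace_fin]
  haveI : Nonempty (Fin n) := ⟨⟨0, hn⟩⟩
  have hsp : ⊤ ≤ Submodule.span ℂ (Set.range e) :=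
    (hon.linearIndependent.span_eq_top_of_card_eq_finrank hcard).ge
  set E : OrthonormalBasis (Fin n) ℂ (EuclideanSpace ℂ (Fin n)) :=
    OrthonormalBasis.mk hon hsp with hE
  have hEcoe : ⇑E = e := OrthonormalBasis.coe_mk hon hsp
  -- the weights
  set lam : Fin n → ℝ := fun k => if (k:ℕ) < d then c - (p:ℝ)/d else c with hlam
  have hlam_nonneg : ∀ k, 0 ≤ lam k := by
    intro k
    rw [hlam]
    by_cases h : (k:ℕ) < d <;> simp [h] <;> linarith
  have hrR : (0:ℝ) < r := by exact_mod_cast hr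
  have hdR : (0:ℝ) < d := by exact_mod_cast hd
  have hlam_sum : ∑ k, lam k = r := by
    rw [Fin.sum_univ_eq_sum_range (fun k => if k < d then c - (p:ℝ)/d else c)]
    rw [← Finset.sum_range_add_sum_Ico _ (le_of_lt hdn)]
    rw [Finset.sum_congr rfl (fun i hi => if_pos (Finset.mem_range.mp hi)),
      Finset.sum_congr rfl (fun i hi => if_neg (by
        have := (Finset.mem_Ico.mp hi).1; omega))]
    rw [Finset.sum_const, Finset.sum_const, Finset.card_range, Nat.card_Ico]
    have hnd : ((n - d : ℕ) : ℝ) = (n:ℝ) - d := by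
      have : d ≤ n := le_of_lt hdn
      push_cast [this]
      ring
    rw [nsmul_eq_mul, nsmul_eq_mul, hnd]
    field_simp
    linarith [htr]
  -- the coefficients
  set w : ℂ := 2 * (Real.pi:ℂ) * Complex.I / r with hw
  have hconjw : (starRingEnd ℂ) w = -w := by
    rw [hw]
    simp only [map_div₀, map_mul, Complex.conj_I, Complex.conj_ofReal, map_ofNat, map_natCast]
    ring
  set a : Fin r → Fin n → ℂ := fun j k =>
    ((Real.sqrt (lam k / r) : ℝ) : ℂ) * Complex.exp (w * ((j:ℕ):ℂ) * ((k:ℕ):ℂ)) with ha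
  set g : Fin r → EuclideanSpace ℂ (Fin n) := fun j => ∑ k, a j k • e k with hg
  have hconj_a : ∀ j k, (starRingEnd ℂ) (a j k)
      = ((Real.sqrt (lam k / r) : ℝ) : ℂ) * Complex.exp (-(w * ((j:ℕ):ℂ) * ((k:ℕ):ℂ))) := by
    intro j k
    rw [ha]
    simp only [map_mul, Complex.conj_ofReal, ← Complex.exp_conj]
    congr 2
    simp only [map_mul, hconjw, map_natCast]
    ring
  have hdiag : ∀ (j : Fin r) (k : Fin n),
      (starRingEnd ℂ) (a j k) * a j k = ((lam k / r : ℝ) : ℂ) := by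
    intro j k
    rw [hconj_a, ha]
    simp only
    rw [mul_mul_mul_comm, ← Complex.exp_add, neg_add_cancel, Complex.exp_zero, mul_one,
      ← Complex.ofReal_mul, Real.mul_self_sqrt (div_nonneg (hlam_nonneg k) hrR.le)]
  -- the key orthogonality sum
  have hS2 : ∀ k l : Fin n, ∑ j : Fin r, (starRingEnd ℂ) (a j k) * a j l
      = if k = l then ((lam k : ℝ) : ℂ) else 0 := by
    intro k l
    by_cases hkl : k = l
    · subst hkl
      rw [if_pos rfl]
      simp_rw [hdiag]
      rw [Finset.sum_const, Finset.card_univ, Fintype.card_fin, nsmul_eq_mul]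
      have hrC : (r:ℂ) ≠ 0 := Nat.cast_ne_zero.mpr hr.ne'
      push_cast
      rw [← mul_div_assoc]
      exact mul_div_cancel_left₀ _ hrC
    · rw [if_neg hkl]
      by_cases hz : Real.sqrt (lam k / r) * Real.sqrt (lam l / r) = 0
      · refine Finset.sum_eq_zero fun j _ => ?_
        rw [hconj_a, ha]
        simp only
        rw [mul_mul_mul_comm, ← Complex.ofReal_mul, hz]
        simp
      · -- both weights positive
        have hknz : Real.sqrt (lam k / r) ≠ 0 := fun h => hz (by rw [h, zero_mul])
        have hlnz : Real.sqrt (lam l / r) ≠ 0 := fun h => hz (by rw [h, mul_zero])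
        set m : ℤ := ((l:ℕ) : ℤ) - ((k:ℕ) : ℤ) with hm
        have hm0 : m ≠ 0 := by
          rw [hm]
          intro h
          apply hkl
          apply Fin.ext
          omega
        have hterm : ∀ j : Fin r, (starRingEnd ℂ) (a j k) * a j l
            = ((Real.sqrt (lam k / r) * Real.sqrt (lam l / r) : ℝ) : ℂ)
              * Complex.exp (w * ((j:ℕ):ℂ) * (m:ℂ)) := by
          intro j
          rw [hconj_a, ha]
          simp only
          rw [mul_mul_mul_comm, ← Complex.ofReal_mul, ← Complex.exp_add]
          congr 2
          rw [hm]
          push_cast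
          ring
        simp_rw [hterm]
        rw [← Finset.mul_sum]
        have hdvd : ¬ ((r:ℤ) ∣ m) := by
          intro hdv
          -- bound |m| < r
          have hbound : m.natAbs < r := by
            rcases hcase with hc1 | hc2
            · -- c = p/d : weights vanish below d
              have hlk : ¬ (k:ℕ) < d := by
                intro hkd
                apply hknz
                rw [hlam]
                simp only [hkd, if_pos, hc1]
                simp
              have hll : ¬ (l:ℕ) < d := by
                intro hld
                apply hlnz
                rw [hlam]
                simp only [hld, if_pos, hc1]
                simp
              have := k.isLt; have := l.isLt
              rw [hm]
              omega
            · have := k.isLt; have := l.isLt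
              rw [hm]
              omega
          have := Int.eq_zero_of_abs_lt_dvd hdv (by
            rw [Int.abs_eq_natAbs]
            exact_mod_cast hbound)
          exact hm0 this
        rw [expSum_zero r hr m hdvd, mul_zero]
  have hrC : (r:ℂ) ≠ 0 := Nat.cast_ne_zero.mpr hr.ne'
  -- norms of the completion vectors
  have hgnorm : ∀ j, ‖g j‖ ^ 2 = 1 := by
    intro j
    have h1 : (inner ℂ (g j) (g j) : ℂ) = ∑ k, (starRingEnd ℂ) (a j k) * a j k := by
      rw [hg]
      exact hon.inner_sum (a j) (a j) Finset.univ
    rw [inner_self_eq_norm_sq_to_K] at h1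
    simp_rw [hdiag j] at h1
    rw [← Complex.ofReal_sum] at h1
    have h2 : ‖g j‖ * ‖g j‖ = ∑ k, lam k / r := by
      have h3 := congrArg Complex.re h1
      simpa [pow_two, Complex.mul_re] using h3
    rw [pow_two, h2, ← Finset.sum_div, hlam_sum, div_self hrR.ne']
  -- frameOp g acts diagonally
  have hge : ∀ k : Fin n, frameOp g (e k) = ((lam k : ℝ) : ℂ) • e k := by
    intro k
    rw [frameOp_apply]
    have h1 : ∀ j, (inner ℂ (g j) (e k) : ℂ) = (starRingEnd ℂ) (a j k) := by
      intro j
      rw [← inner_conj_symm]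
      congr 1
      rw [hg]
      exact hon.inner_right_fintype (a j) k
    simp_rw [h1, hg, Finset.smul_sum, smul_smul]
    rw [Finset.sum_comm]
    have h2 : ∀ l, (∑ j : Fin r, ((starRingEnd ℂ) (a j k) * a j l) • e l)
        = (if k = l then ((lam k:ℝ):ℂ) else 0) • e l := by
      intro l
      rw [← Finset.sum_smul, hS2 k l]
    simp_rw [h2, ite_smul, zero_smul]
    rw [Finset.sum_ite_eq]
    simp
  -- frameOp f acts diagonally
  have hfe : ∀ k : Fin n, frameOp f (e k)
      = (if (k:ℕ) < d then (((p:ℝ)/d : ℝ):ℂ) else 0) • e k := by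
    intro k
    rw [hS (e k)]
    by_cases h : (k:ℕ) < d
    · rw [if_pos h, Submodule.coe_orthogonalProjectionOnto_apply, Submodule.starProjection_eq_self_iff.mpr (heV k h)]
    · rw [if_neg h, zero_smul,
        Submodule.orthogonalProjectionOnto_apply_of_mem_orthogonal (heW k h)]
      simp
  -- conclude
  refine ⟨c, g, hc, fun i => by simpa using hgnorm i, ?_⟩
  apply ContinuousLinearMap.coe_injective
  apply Module.Basis.ext E.toBasis
  intro k
  have hEk : E.toBasis k = e k := by rw [OrthonormalBasis.coe_toBasis, hEcoe]
  have hkey : (frameOp f) (e k) + (frameOp g) (e k) = ((c:ℝ):ℂ) • e k := by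
    rw [hfe, hge, ← add_smul]
    congr 1
    by_cases h : (k:ℕ) < d
    · rw [if_pos h, hlam]
      simp only [h, if_true]
      push_cast
      ring
    · rw [if_neg h, hlam]
      simp [h]
  rw [hEk]
  simpa using hkey
end UB

theorem minimal_completion_of_subspace_tight_frame {n p d : ℕ} (hn : 0 < n)
    (hd : 0 < d) (hdn : d < n) (hdp : d ≤ p)
    (f : Fin p → EuclideanSpace ℂ (Fin n)) (hf : ∀ i, ‖f i‖ = 1)
    (hdim : Module.finrank ℂ (Submodule.span ℂ (Set.range f)) = d)
    (hS : ∀ x, frameOp f x = (((p : ℝ) / d : ℝ) : ℂ) •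
      ((Submodule.orthogonalProjection (Submodule.span ℂ (Set.range f)) x : Submodule.span ℂ (Set.range f)) :
        EuclideanSpace ℂ (Fin n)))
    (r0 : ℕ) (hr0 : Completable f (fun _ => (1 : ℝ)) r0)
    (hr0min : ∀ k, Completable f (fun _ => (1 : ℝ)) k → r0 ≤ k) :
    (((n : ℝ) - d) * ((p : ℝ) / d) < n →
      ((∃ m : ℕ, (m : ℝ) = ((n : ℝ) - d) * ((p : ℝ) / d)) →
          (r0 : ℝ) = ((n : ℝ) - d) * ((p : ℝ) / d)) ∧
      ((¬ ∃ m : ℕ, (m : ℝ) = ((n : ℝ) - d) * ((p : ℝ) / d)) → r0 = n)) ∧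
    ((n : ℝ) ≤ ((n : ℝ) - d) * ((p : ℝ) / d) →
      (r0 : ℤ) = ⌈((n : ℝ) - d) * ((p : ℝ) / d)⌉) := by
  classical
  set x : ℝ := ((n : ℝ) - d) * ((p : ℝ) / d) with hx
  have hdR : (0:ℝ) < d := by exact_mod_cast hd
  have hnR : (0:ℝ) < n := by exact_mod_cast hn
  have hpR : (0:ℝ) ≤ p := by positivity
  have hpd1 : (1:ℝ) ≤ (p:ℝ)/d := by
    rw [le_div_iff₀ hdR]
    simp only [one_mul]
    exact_mod_cast hdp
  have hndR : ((n - d : ℕ) : ℝ) = (n:ℝ) - (d:ℝ) := by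
    have : d ≤ n := le_of_lt hdn
    push_cast [this]
    ring
  have hxeq : x = (n:ℝ) * ((p:ℝ)/d) - p := by rw [hx]; field_simp
  have hLB := lower_bound hn hd hdn hdp f hf hdim hS
  have hxle : x ≤ (r0 : ℝ) := (hLB r0 hr0).1
  constructor
  · intro hlt
    constructor
    · rintro ⟨m, hm⟩
      -- r0 = m = x
      have hmnd : n - d ≤ m := by
        have h1 : ((n - d : ℕ) : ℝ) ≤ (m : ℝ) := by
          rw [hndR, hm, hx]
          nlinarith
        exact_mod_cast h1
      have hm0 : 0 < m := by
        have h1 : (0:ℝ) < (m:ℝ) := by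
          rw [hm, hx]
          have : (0:ℝ) < (n:ℝ) - d := by
            have : (d:ℝ) < n := by exact_mod_cast hdn
            linarith
          nlinarith
        exact_mod_cast h1
      have hcm : Completable f (fun _ => 1) m := by
        refine construct hn hd hdn hdp f hdim hS m ((p:ℝ)/d) (by positivity) hmnd hm0
          le_rfl ?_ (Or.inl rfl)
        rw [← hxeq, ← hm]
      have h1 : r0 ≤ m := hr0min m hcm
      have h2 : m ≤ r0 := by
        have : (m:ℝ) ≤ r0 := by rw [hm]; exact hxle
        exact_mod_cast this
      have : r0 = m := le_antisymm h1 h2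
      rw [this, hm]
    · intro hni
      have hcn : Completable f (fun _ => 1) n := by
        refine construct hn hd hdn hdp f hdim hS n (((p:ℝ) + n)/n) (by positivity)
          (Nat.sub_le n d) hn ?_ ?_ (Or.inr le_rfl)
        · have h5 : (n:ℝ)*((p:ℝ)/d) - p < n := by rw [← hxeq]; exact hlt
          have h6 : (n:ℝ)*((p:ℝ)/d) = n*p/d := by ring
          have h7 : (n:ℝ)*p/d < n + p := by rw [← h6]; linarith
          rw [div_lt_iff₀ hdR] at h7
          rw [div_le_div_iff₀ hdR hnR]
          nlinarith [h7]
        · field_simp; ring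
      have h1 : r0 ≤ n := hr0min n hcn
      have h2 : n ≤ r0 := by
        by_contra hcon
        push_neg at hcon
        exact hni ⟨r0, ((hLB r0 hr0).2 hcon)⟩
      exact le_antisymm h1 h2
  · intro hge
    have hx0 : (0:ℝ) < x := lt_of_lt_of_le hnR hge
    have hceil0 : 0 ≤ ⌈x⌉ := Int.ceil_nonneg hx0.le
    set r : ℕ := (⌈x⌉).toNat with hrdef
    have hrcast : ((r:ℕ) : ℤ) = ⌈x⌉ := Int.toNat_of_nonneg hceil0
    have hrR : x ≤ (r : ℝ) := by
      have h1 : ((r:ℕ):ℝ) = ((⌈x⌉ : ℤ) : ℝ) := by exact_mod_cast hrcast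
      rw [h1]
      exact Int.le_ceil x
    have hnr : n ≤ r := by
      have h1 : (n:ℝ) ≤ (r:ℝ) := le_trans hge hrR
      exact_mod_cast h1
    have hr0' : 0 < r := lt_of_lt_of_le hn hnr
    have hcr : Completable f (fun _ => 1) r := by
      refine construct hn hd hdn hdp f hdim hS r (((p:ℝ) + r)/n) (by positivity)
        (le_trans (Nat.sub_le n d) hnr) hr0' ?_ ?_ (Or.inr hnr)
      · have h5 : (n:ℝ)*((p:ℝ)/d) - p ≤ r := by rw [← hxeq]; exact hrR
        have h6 : (n:ℝ)*((p:ℝ)/d) = n*p/d := by ring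
        have h7 : (n:ℝ)*p/d ≤ (r:ℝ) + p := by rw [← h6]; linarith
        rw [div_le_iff₀ hdR] at h7
        rw [div_le_div_iff₀ hdR hnR]
        nlinarith [h7]
      · field_simp; ring
    have h1 : r0 ≤ r := hr0min r hcr
    have h2 : ⌈x⌉ ≤ (r0 : ℤ) := by
      rw [Int.ceil_le]
      push_cast
      exact hxle
    have h3 : (r0 : ℤ) ≤ ⌈x⌉ := by
      rw [← hrcast]
      exact_mod_cast h1
    exact le_antisymm h3 h2
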